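/- Let X₁, X₂, … be i.i.d. uniform on a finite alphabet of size |A| = N ≥ 3, p = 1/N, and let R_i, R_j be the hitting times of two distinct targets. Then Cov(log R_i, log R_j) ≥ −p log(1/p) · C for some absolute constant C (in fact Cov(log R_i, log R_j) ≥ p log p for small p), and Cov(log R_i, log R_j) ≤ 0; hence |Cov(log R_i, log R_j)| = O(p log(1/p)) as N → ∞. -/

import Mathlib

open MeasureTheory ProbabilityTheory Filter
open scoped ENNReal NNReal

/-- elementary: `x^(n+1) - y^(n+1) ≤ (n+1)(x-y)x^n` for `0 ≤ y ≤ x`. -/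
lemma HTCov.pow_sub_pow_le {x y : ℝ} (hy : 0 ≤ y) (hxy : y ≤ x) (n : ℕ) :
    x ^ (n + 1) - y ^ (n + 1) ≤ ((n : ℝ) + 1) * (x - y) * x ^ n := by
  induction n with
  | zero => simp
  | succ n ih =>
    have hx : 0 ≤ x := hy.trans hxy
    have hyx : y ^ (n + 1) ≤ x ^ (n + 1) := pow_le_pow_left₀ hy hxy _
    have h1 : x * (x ^ (n + 1) - y ^ (n + 1)) ≤ x * (((n : ℝ) + 1) * (x - y) * x ^ n) :=
      mul_le_mul_of_nonneg_left ih hx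
    have h2 : (x - y) * y ^ (n + 1) ≤ (x - y) * x ^ (n + 1) :=
      mul_le_mul_of_nonneg_left hyx (by linarith)
    calc x ^ (n + 2) - y ^ (n + 2)
        = x * (x ^ (n + 1) - y ^ (n + 1)) + (x - y) * y ^ (n + 1) := by ring
      _ ≤ x * (((n : ℝ) + 1) * (x - y) * x ^ n) + (x - y) * x ^ (n + 1) := add_le_add h1 h2
      _ = ((n : ℝ) + 1 + 1) * (x - y) * x ^ (n + 1) := by ring
      _ = ((↑(n + 1) : ℝ) + 1) * (x - y) * x ^ (n + 1) := by push_cast; ring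

noncomputable def HTCov.aseq (k : ℕ) : ℝ := Real.log (k + 2) - Real.log (k + 1)

lemma HTCov.aseq_nonneg (k : ℕ) : 0 ≤ HTCov.aseq k := by
  have : Real.log (k + 1) ≤ Real.log (k + 2) := by
    apply Real.log_le_log (by positivity); push_cast; linarith
  simpa [HTCov.aseq] using this

lemma HTCov.aseq_le (k : ℕ) : HTCov.aseq k ≤ 1 / ((k : ℝ) + 1) := by
  have h1 : (0:ℝ) < (k : ℝ) + 1 := by positivity
  have h2 : (0:ℝ) < (k : ℝ) + 2 := by positivity
  have h := Real.log_le_sub_one_of_pos (x := ((k : ℝ) + 2) / ((k : ℝ) + 1)) (by positivity)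
  rw [Real.log_div (by positivity) (by positivity)] at h
  have heq : ((k : ℝ) + 2) / ((k : ℝ) + 1) - 1 = 1 / ((k : ℝ) + 1) := by field_simp; norm_num
  rw [heq] at h
  have hd : HTCov.aseq k = Real.log ((k:ℝ) + 2) - Real.log ((k:ℝ) + 1) := rfl
  linarith

lemma HTCov.aseq_le_one (k : ℕ) : HTCov.aseq k ≤ 1 := by
  have := HTCov.aseq_le k
  have h1 : (1:ℝ) / ((k : ℝ) + 1) ≤ 1 := by
    rw [div_le_one (by positivity)]; linarith [Nat.cast_nonneg (α := ℝ) k]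
  linarith

lemma HTCov.aseq_mul_le (k : ℕ) : HTCov.aseq k * ((k : ℝ) + 1) ≤ 1 := by
  have h1 : (0:ℝ) < (k : ℝ) + 1 := by positivity
  have := HTCov.aseq_le k
  calc HTCov.aseq k * ((k : ℝ) + 1) ≤ (1 / ((k : ℝ) + 1)) * ((k : ℝ) + 1) :=
        mul_le_mul_of_nonneg_right this h1.le
    _ = 1 := by field_simp

lemma HTCov.sum_aseq (m : ℕ) :
    ∑ k ∈ Finset.range m, HTCov.aseq k = Real.log (m + 1) := by
  induction m with
  | zero => simp
  | succ m ih =>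
    rw [Finset.sum_range_succ, ih]
    simp only [HTCov.aseq]
    push_cast
    ring

lemma HTCov.tsum_aseq (n : ℕ) :
    ∑' k : ℕ, (if k + 2 ≤ n then HTCov.aseq k else 0) = Real.log n := by
  rcases n with _ | _ | m
  · rw [tsum_congr (fun k => if_neg (by omega))]
    simp
  · rw [tsum_congr (fun k => if_neg (by omega))]
    simp
  · rw [tsum_eq_sum (s := Finset.range (m + 1))
      (fun k hk => if_neg (by simp only [Finset.mem_range] at hk; omega))]
    rw [Finset.sum_congr rfl (fun k hk => if_pos (by simp only [Finset.mem_range] at hk; omega))]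
    rw [HTCov.sum_aseq]
    push_cast
    ring_nf

open HTCov

set_option maxHeartbeats 2000000 in
/-- For i.i.d. uniform draws on an alphabet of size `N ≥ 3` with `p = 1/N`, and
hitting times `R_i, R_j` of two distinct targets, the covariance of `log R_i` and
`log R_j` is nonpositive and bounded below by `−C p log(1/p)` for an absolute
constant `C`; hence `|Cov(log R_i, log R_j)| = O(p log(1/p))`. -/
theorem hitting_time_log_covariance_bound :
    ∃ C > (0 : ℝ),
      ∀ (N : ℕ), 3 ≤ N →
      ∀ {Ω : Type} [inst : MeasurableSpace Ω] (μ : Measure Ω), ∀ [IsProbabilityMeasure μ],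
      ∀ (X : ℕ → Ω → Fin N), (∀ i, Measurable (X i)) →
        iIndepFun X μ →
        (∀ i (a : Fin N), μ {ω | X i ω = a} = 1 / N) →
      ∀ (bi bj : Fin N), bi ≠ bj →
      ∀ (Ri Rj : Ω → ℕ),
        (∀ ω, Ri ω = sInf {t | 1 ≤ t ∧ X t ω = bi}) →
        (∀ ω, Rj ω = sInf {t | 1 ≤ t ∧ X t ω = bj}) →
      ((∫ ω, Real.log (Ri ω) * Real.log (Rj ω) ∂μ) -
          (∫ ω, Real.log (Ri ω) ∂μ) * ∫ ω, Real.log (Rj ω) ∂μ ≤ 0) ∧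
      (-(C * (1 / N) * Real.log N) ≤
        (∫ ω, Real.log (Ri ω) * Real.log (Rj ω) ∂μ) -
          (∫ ω, Real.log (Ri ω) ∂μ) * ∫ ω, Real.log (Rj ω) ∂μ) := by
  refine ⟨2, by norm_num, ?_⟩
  intro N hN Ω inst μ instP X hXm hXind hXu bi bj hbij Ri Rj hRi hRj
  -- real constants
  have hN3 : (3:ℝ) ≤ (N:ℝ) := by exact_mod_cast hN
  have hNpos : (0:ℝ) < (N:ℝ) := by linarith
  set q : ℝ := 1 - 1/(N:ℝ) with hq_def
  set r : ℝ := 1 - 2/(N:ℝ) with hr_def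
  have hpN : (0:ℝ) < 1/(N:ℝ) := by positivity
  have hpN3 : 1/(N:ℝ) ≤ 1/3 := by
    rw [div_le_div_iff₀ hNpos (by norm_num)]; linarith
  have hq_pos : (0:ℝ) < q := by rw [hq_def]; linarith
  have hq_lt1 : q < 1 := by rw [hq_def]; linarith
  have hq_ge : (2:ℝ)/3 ≤ q := by rw [hq_def]; linarith
  have h2N3 : (2:ℝ)/(N:ℝ) ≤ 2/3 := div_le_div_of_nonneg_left (by norm_num) (by norm_num) hN3
  have hr_nonneg : (0:ℝ) ≤ r := by rw [hr_def]; linarith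
  have hq2r : q^2 - r = (1/(N:ℝ))^2 := by rw [hr_def, hq_def]; ring
  have hrq2 : r ≤ q^2 := by rw [← sub_nonneg, hq2r]; positivity
  -- ENNReal constants
  have hNE0 : (N:ℝ≥0∞) ≠ 0 := by
    simp only [ne_eq, Nat.cast_eq_zero]; omega
  have hNEtop : (N:ℝ≥0∞) ≠ ⊤ := ENNReal.natCast_ne_top N
  set qE : ℝ≥0∞ := 1 - 1/(N:ℝ≥0∞) with hqE_def
  set rE : ℝ≥0∞ := 1 - 2/(N:ℝ≥0∞) with hrE_def
  have h1N_ne0 : (1:ℝ≥0∞)/(N:ℝ≥0∞) ≠ 0 := by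
    simp [ENNReal.div_eq_zero_iff, hNEtop]
  have h1N_le : (1:ℝ≥0∞)/(N:ℝ≥0∞) ≤ 1 := by
    apply ENNReal.div_le_of_le_mul; simpa using (Nat.one_le_cast (α := ℝ≥0∞)).mpr (by omega)
  have h2N_le : (2:ℝ≥0∞)/(N:ℝ≥0∞) ≤ 1 := by
    apply ENNReal.div_le_of_le_mul
    simpa using (by exact_mod_cast Nat.cast_le.mpr (show 2 ≤ N by omega) :
      (2:ℝ≥0∞) ≤ (N:ℝ≥0∞))
  have hqE_ne_top : qE ≠ ⊤ := by
    rw [hqE_def]; exact (tsub_le_self.trans_lt ENNReal.one_lt_top).ne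
  have hrE_ne_top : rE ≠ ⊤ := by
    rw [hrE_def]; exact (tsub_le_self.trans_lt ENNReal.one_lt_top).ne
  have h1N_toReal : ((1:ℝ≥0∞)/(N:ℝ≥0∞)).toReal = 1/(N:ℝ) := by
    rw [ENNReal.toReal_div]; simp
  have h2N_toReal : ((2:ℝ≥0∞)/(N:ℝ≥0∞)).toReal = 2/(N:ℝ) := by
    rw [ENNReal.toReal_div]; simp
  have hqE_toReal : qE.toReal = q := by
    rw [hqE_def, ENNReal.toReal_sub_of_le h1N_le ENNReal.one_ne_top, h1N_toReal,
      ENNReal.toReal_one, hq_def]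
  have hrE_toReal : rE.toReal = r := by
    rw [hrE_def, ENNReal.toReal_sub_of_le h2N_le ENNReal.one_ne_top, h2N_toReal,
      ENNReal.toReal_one, hr_def]
  have hqE_lt1 : qE < 1 := by
    rw [hqE_def]; exact ENNReal.sub_lt_self ENNReal.one_ne_top one_ne_zero h1N_ne0
  have h1subqE : 1 - qE = 1/(N:ℝ≥0∞) := by
    rw [hqE_def]; exact ENNReal.sub_sub_cancel ENNReal.one_ne_top h1N_le
  have hgeomE : ∑' k:ℕ, qE ^ k ≠ ⊤ := by
    rw [ENNReal.tsum_geometric, h1subqE, one_div, inv_inv]; exact hNEtop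
  have hgeomE1 : ∑' k:ℕ, qE ^ (k+1) ≠ ⊤ :=
    ne_top_of_le_ne_top hgeomE (ENNReal.tsum_le_tsum (fun k => by
      rw [pow_succ]
      calc qE ^ k * qE ≤ qE ^ k * 1 := mul_le_mul_right hqE_lt1.le _
        _ = qE ^ k := mul_one _))
  -- basic events
  have hsingle : ∀ (t:ℕ) (c : Fin N), μ (X t ⁻¹' {c}) = 1/(N:ℝ≥0∞) := by
    intro t c
    have : X t ⁻¹' {c} = {ω | X t ω = c} := by ext ω; simp [Set.mem_preimage]
    rw [this, hXu t c]
  have hcompl1 : ∀ (t:ℕ) (c : Fin N), μ (X t ⁻¹' ({c}ᶜ)) = qE := by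
    intro t c
    rw [Set.preimage_compl, prob_compl_eq_one_sub (hXm t MeasurableSet.of_discrete),
      hsingle t c, hqE_def]
  have hcompl2 : ∀ (t:ℕ) (c d : Fin N), c ≠ d → μ (X t ⁻¹' (({c, d} : Set (Fin N))ᶜ)) = rE := by
    intro t c d hcd
    rw [Set.preimage_compl, prob_compl_eq_one_sub (hXm t MeasurableSet.of_discrete)]
    have : X t ⁻¹' ({c, d} : Set (Fin N)) = X t ⁻¹' {c} ∪ X t ⁻¹' {d} := by
      rw [Set.insert_eq, Set.preimage_union]
    rw [this, measure_union ?disj (hXm t MeasurableSet.of_discrete), hsingle t c, hsingle t d,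
      hrE_def]
    · congr 1
      rw [ENNReal.div_add_div_same, one_add_one_eq_two]
    case disj =>
      apply Set.disjoint_left.mpr
      intro ω h1 h2
      simp only [Set.mem_preimage, Set.mem_singleton_iff] at h1 h2
      exact hcd (h1 ▸ h2 ▸ rfl)
  -- independence: product formula
  have hprod : ∀ (S : Finset ℕ) (T : ℕ → Set (Fin N)),
      μ (⋂ t ∈ S, X t ⁻¹' (T t)) = ∏ t ∈ S, μ (X t ⁻¹' (T t)) := by
    intro S T
    exact hXind.meas_biInter (fun t _ => ⟨T t, MeasurableSet.of_discrete, rfl⟩)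
  -- the "eventually hit" events are a.s.
  have hGnull : ∀ c : Fin N, μ ((⋃ n:ℕ, X (n+1) ⁻¹' {c})ᶜ) = 0 := by
    intro c
    have hle : ∀ n:ℕ, μ ((⋃ m:ℕ, X (m+1) ⁻¹' {c})ᶜ) ≤ qE ^ n := by
      intro n
      have hsub : ((⋃ m:ℕ, X (m+1) ⁻¹' {c})ᶜ) ⊆ ⋂ t ∈ Finset.Icc 1 n, X t ⁻¹' ({c}ᶜ) := by
        intro ω hω
        simp only [Set.mem_compl_iff, Set.mem_iUnion, not_exists, Set.mem_preimage,
          Set.mem_singleton_iff] at hω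
        simp only [Set.mem_iInter, Finset.mem_Icc, Set.mem_preimage, Set.mem_compl_iff,
          Set.mem_singleton_iff]
        rintro t ⟨ht1, _⟩
        obtain ⟨m, rfl⟩ : ∃ m, t = m + 1 := ⟨t - 1, by omega⟩
        exact hω m
      calc μ ((⋃ m:ℕ, X (m+1) ⁻¹' {c})ᶜ) ≤ μ (⋂ t ∈ Finset.Icc 1 n, X t ⁻¹' ({c}ᶜ)) :=
            measure_mono hsub
        _ = ∏ t ∈ Finset.Icc 1 n, μ (X t ⁻¹' ({c}ᶜ)) := hprod _ _
        _ = qE ^ n := by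
            rw [Finset.prod_congr rfl (fun t _ => hcompl1 t c), Finset.prod_const, Nat.card_Icc, Nat.add_sub_cancel]
    have h0 : Tendsto (fun n:ℕ => qE ^ n) atTop (nhds 0) :=
      ENNReal.tendsto_pow_atTop_nhds_zero_of_lt_one hqE_lt1
    exact le_zero_iff.mp (le_of_tendsto_of_tendsto' tendsto_const_nhds h0 hle)
  -- intersecting with a conull set
  have hinter : ∀ (s g : Set Ω), μ (gᶜ) = 0 → μ (s ∩ g) = μ s := by
    intro s g hg
    apply le_antisymm (measure_mono Set.inter_subset_left)
    calc μ s = μ ((s ∩ g) ∪ (s ∩ gᶜ)) := by rw [Set.inter_union_compl]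
      _ ≤ μ (s ∩ g) + μ (s ∩ gᶜ) := measure_union_le _ _
      _ ≤ μ (s ∩ g) + μ (gᶜ) := by gcongr; exact Set.inter_subset_right
      _ = μ (s ∩ g) := by rw [hg, add_zero]
  -- hitting-time event identity
  have hset : ∀ (R : Ω → ℕ) (c : Fin N), (∀ ω, R ω = sInf {t | 1 ≤ t ∧ X t ω = c}) →
      ∀ k : ℕ, {ω | k + 2 ≤ R ω}
        = (⋂ t ∈ Finset.Icc 1 (k+1), X t ⁻¹' ({c}ᶜ)) ∩ ⋃ n:ℕ, X (n+1) ⁻¹' {c} := by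
    intro R c hR k
    ext ω
    simp only [Set.mem_setOf_eq, Set.mem_inter_iff, Set.mem_iInter, Finset.mem_Icc,
      Set.mem_preimage, Set.mem_compl_iff, Set.mem_singleton_iff, Set.mem_iUnion]
    constructor
    · intro h
      have hne : {t | 1 ≤ t ∧ X t ω = c}.Nonempty := by
        by_contra hemp
        rw [Set.not_nonempty_iff_eq_empty] at hemp
        have := hR ω
        rw [hemp, Nat.sInf_empty] at this
        omega
      have hmem := Nat.sInf_mem hne
      rw [← hR ω] at hmem
      obtain ⟨h1, h2⟩ := hmem
      refine ⟨?_, ⟨R ω - 1, by rwa [Nat.sub_add_cancel h1]⟩⟩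
      rintro t ⟨ht1, ht2⟩ hXtc
      have : R ω ≤ t := by rw [hR ω]; exact Nat.sInf_le ⟨ht1, hXtc⟩
      omega
    · rintro ⟨hA, n, hn⟩
      have hne : {t | 1 ≤ t ∧ X t ω = c}.Nonempty := ⟨n + 1, ⟨by omega, hn⟩⟩
      have hmem := Nat.sInf_mem hne
      rw [← hR ω] at hmem
      by_contra hlt
      push_neg at hlt
      exact hA (R ω) ⟨hmem.1, by omega⟩ hmem.2
  -- marginal measure
  have hmarg : ∀ (R : Ω → ℕ) (c : Fin N), (∀ ω, R ω = sInf {t | 1 ≤ t ∧ X t ω = c}) →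
      ∀ k : ℕ, μ {ω | k + 2 ≤ R ω} = qE ^ (k+1) := by
    intro R c hR k
    rw [hset R c hR k, hinter _ _ (hGnull c), hprod,
      Finset.prod_congr rfl (fun t _ => hcompl1 t c), Finset.prod_const, Nat.card_Icc,
      Nat.add_sub_cancel]
  -- joint measure, ordered case
  have hkey : ∀ (R S : Ω → ℕ) (c d : Fin N), c ≠ d →
      (∀ ω, R ω = sInf {t | 1 ≤ t ∧ X t ω = c}) →
      (∀ ω, S ω = sInf {t | 1 ≤ t ∧ X t ω = d}) →
      ∀ k l : ℕ, k ≤ l →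
      μ ({ω | k + 2 ≤ R ω} ∩ {ω | l + 2 ≤ S ω}) = rE ^ (k+1) * qE ^ (l-k) := by
    intro R S c d hcd hR hS k l hkl
    rw [hset R c hR k, hset S d hS l]
    rw [Set.inter_inter_inter_comm]
    rw [hinter _ _ (by rw [Set.compl_inter]; exact measure_union_null (hGnull c) (hGnull d))]
    have hAB : (⋂ t ∈ Finset.Icc 1 (k+1), X t ⁻¹' ({c}ᶜ)) ∩
        (⋂ t ∈ Finset.Icc 1 (l+1), X t ⁻¹' ({d}ᶜ)) =
        ⋂ t ∈ Finset.Icc 1 (l+1), X t ⁻¹'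
          (if t ≤ k + 1 then ({c, d} : Set (Fin N))ᶜ else ({d} : Set (Fin N))ᶜ) := by
      ext ω
      simp only [Set.mem_inter_iff, Set.mem_iInter, Finset.mem_Icc, Set.mem_preimage,
        Set.mem_compl_iff, Set.mem_singleton_iff]
      constructor
      · rintro ⟨h1, h2⟩ t ⟨ht1, ht2⟩
        by_cases ht : t ≤ k + 1
        · rw [if_pos ht]
          simp only [Set.mem_compl_iff, Set.mem_insert_iff, Set.mem_singleton_iff]
          push_neg
          exact ⟨h1 t ⟨ht1, ht⟩, h2 t ⟨ht1, ht2⟩⟩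
        · rw [if_neg ht]
          simp only [Set.mem_compl_iff, Set.mem_singleton_iff]
          exact h2 t ⟨ht1, ht2⟩
      · intro h
        constructor
        · rintro t ⟨ht1, ht2⟩
          have := h t ⟨ht1, by omega⟩
          rw [if_pos ht2] at this
          simp only [Set.mem_compl_iff, Set.mem_insert_iff, Set.mem_singleton_iff] at this
          push_neg at this
          exact this.1
        · rintro t ⟨ht1, ht2⟩
          have := h t ⟨ht1, ht2⟩
          by_cases ht : t ≤ k + 1
          · rw [if_pos ht] at this
            simp only [Set.mem_compl_iff, Set.mem_insert_iff, Set.mem_singleton_iff] at this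
            push_neg at this
            exact this.2
          · rw [if_neg ht] at this
            simpa using this
    rw [hAB, hprod]
    have hsplit : Finset.Icc 1 (l+1) = Finset.Icc 1 (k+1) ∪ Finset.Icc (k+2) (l+1) := by
      ext t; simp only [Finset.mem_Icc, Finset.mem_union]; omega
    rw [hsplit, Finset.prod_union (by
      apply Finset.disjoint_left.mpr
      intro t ht1 ht2
      simp only [Finset.mem_Icc] at ht1 ht2
      omega)]
    have h1 : ∏ t ∈ Finset.Icc 1 (k+1), μ (X t ⁻¹'
        (if t ≤ k + 1 then ({c, d} : Set (Fin N))ᶜ else ({d} : Set (Fin N))ᶜ)) = rE ^ (k+1) := by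
      have hval : ∀ t ∈ Finset.Icc 1 (k+1), μ (X t ⁻¹'
          (if t ≤ k + 1 then ({c, d} : Set (Fin N))ᶜ else ({d} : Set (Fin N))ᶜ)) = rE := by
        intro t ht
        rw [if_pos (by simp only [Finset.mem_Icc] at ht; omega)]
        exact hcompl2 t c d hcd
      rw [Finset.prod_congr rfl hval, Finset.prod_const, Nat.card_Icc, Nat.add_sub_cancel]
    have h2 : ∏ t ∈ Finset.Icc (k+2) (l+1), μ (X t ⁻¹'
        (if t ≤ k + 1 then ({c, d} : Set (Fin N))ᶜ else ({d} : Set (Fin N))ᶜ)) = qE ^ (l-k) := by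
      have hval : ∀ t ∈ Finset.Icc (k+2) (l+1), μ (X t ⁻¹'
          (if t ≤ k + 1 then ({c, d} : Set (Fin N))ᶜ else ({d} : Set (Fin N))ᶜ)) = qE := by
        intro t ht
        rw [if_neg (by simp only [Finset.mem_Icc] at ht; omega)]
        exact hcompl1 t d
      rw [Finset.prod_congr rfl hval, Finset.prod_const, Nat.card_Icc]
      congr 1
      omega
    rw [h1, h2]
  -- events
  set E : ℕ → Set Ω := fun k => {ω | k + 2 ≤ Ri ω} with hE_def
  set F : ℕ → Set Ω := fun l => {ω | l + 2 ≤ Rj ω} with hF_def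
  have hEk_eq : ∀ k, E k = {ω | k + 2 ≤ Ri ω} := fun k => by rw [hE_def]
  have hFl_eq : ∀ l, F l = {ω | l + 2 ≤ Rj ω} := fun l => by rw [hF_def]
  have hEmeas : ∀ k, MeasurableSet (E k) := by
    intro k
    rw [hEk_eq k, hset Ri bi hRi k]
    exact (Finset.measurableSet_biInter _ (fun t _ => hXm t MeasurableSet.of_discrete)).inter
      (MeasurableSet.iUnion (fun n => hXm (n+1) MeasurableSet.of_discrete))
  have hFmeas : ∀ l, MeasurableSet (F l) := by
    intro l
    rw [hFl_eq l, hset Rj bj hRj l]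
    exact (Finset.measurableSet_biInter _ (fun t _ => hXm t MeasurableSet.of_discrete)).inter
      (MeasurableSet.iUnion (fun n => hXm (n+1) MeasurableSet.of_discrete))
  have hE_val : ∀ k, μ (E k) = qE ^ (k+1) := by
    intro k; rw [hEk_eq k]; exact hmarg Ri bi hRi k
  have hF_val : ∀ l, μ (F l) = qE ^ (l+1) := by
    intro l; rw [hFl_eq l]; exact hmarg Rj bj hRj l
  have hEF : ∀ k l, μ (E k ∩ F l) = rE ^ (min k l + 1) * qE ^ (max k l - min k l) := by
    intro k l
    rcases le_total k l with h | h
    · rw [min_eq_left h, max_eq_right h, hEk_eq k, hFl_eq l]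
      exact hkey Ri Rj bi bj hbij hRi hRj k l h
    · rw [min_eq_right h, max_eq_left h, hEk_eq k, hFl_eq l, Set.inter_comm]
      exact hkey Rj Ri bj bi (Ne.symm hbij) hRj hRi l k h
  -- real versions
  have hEr : ∀ k, (μ (E k)).toReal = q ^ (k+1) := by
    intro k; rw [hE_val k, ENNReal.toReal_pow, hqE_toReal]
  have hFr : ∀ l, (μ (F l)).toReal = q ^ (l+1) := by
    intro l; rw [hF_val l, ENNReal.toReal_pow, hqE_toReal]
  have hEFr : ∀ k l, (μ (E k ∩ F l)).toReal
      = r ^ (min k l + 1) * q ^ (max k l - min k l) := by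
    intro k l
    rw [hEF k l, ENNReal.toReal_mul, ENNReal.toReal_pow, ENNReal.toReal_pow, hqE_toReal,
      hrE_toReal]
  have hrEq2 : rE ≤ qE * qE := by
    rw [← ENNReal.toReal_le_toReal hrE_ne_top (ENNReal.mul_ne_top hqE_ne_top hqE_ne_top),
      ENNReal.toReal_mul, hqE_toReal, hrE_toReal, ← pow_two]
    exact hrq2
  have hEFle : ∀ k l, μ (E k ∩ F l) ≤ qE ^ (k+1) * qE ^ (l+1) := by
    intro k l
    rw [hEF k l]
    have h1 := min_le_max (a := k) (b := l)
    have h2 := min_add_max k l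
    calc rE ^ (min k l + 1) * qE ^ (max k l - min k l)
        ≤ (qE * qE) ^ (min k l + 1) * qE ^ (max k l - min k l) :=
          mul_le_mul_left (pow_le_pow_left' hrEq2 _) _
      _ = qE ^ (min k l + 1) * qE ^ (min k l + 1) * qE ^ (max k l - min k l) := by
          rw [mul_pow]
      _ = qE ^ ((min k l + 1) + (min k l + 1) + (max k l - min k l)) := by
          rw [← pow_add, ← pow_add]
      _ = qE ^ (k+1) * qE ^ (l+1) := by
          rw [← pow_add]
          congr 1
          omega
  -- pointwise expansion of the logarithm
  have hlog_eq : ∀ (R : Ω → ℕ) (Ek : ℕ → Set Ω), (∀ k, Ek k = {ω | k + 2 ≤ R ω}) →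
      ∀ ω, Real.log (R ω) = ∑' k : ℕ, (Ek k).indicator (fun _ => aseq k) ω := by
    intro R Ek hEk ω
    rw [← tsum_aseq (R ω)]
    apply tsum_congr
    intro k
    by_cases h : k + 2 ≤ R ω
    · rw [if_pos h, Set.indicator_of_mem (show ω ∈ Ek k by rw [hEk k]; exact h)]
    · rw [if_neg h, Set.indicator_of_notMem (show ω ∉ Ek k by rw [hEk k]; exact h)]
  -- marginal integrals
  have hint_marg : ∀ (R : Ω → ℕ) (Ek : ℕ → Set Ω), (∀ k, Ek k = {ω | k + 2 ≤ R ω}) →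
      (∀ k, MeasurableSet (Ek k)) → (∀ k, μ (Ek k) = qE ^ (k+1)) →
      ∫ ω, Real.log (R ω) ∂μ = ∑' k : ℕ, q ^ (k+1) * aseq k := by
    intro R Ek hEk hEm hEv
    have h1 : ∫ ω, Real.log (R ω) ∂μ
        = ∫ ω, ∑' k : ℕ, (Ek k).indicator (fun _ => aseq k) ω ∂μ := by
      apply integral_congr_ae
      filter_upwards with ω using hlog_eq R Ek hEk ω
    have hfin : ∑' k : ℕ, ∫⁻ ω, ‖(Ek k).indicator (fun _ => aseq k) ω‖₊ ∂μ ≠ ⊤ := by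
      apply ne_top_of_le_ne_top hgeomE1
      apply ENNReal.tsum_le_tsum
      intro k
      have heq : (fun ω => (‖(Ek k).indicator (fun _ => aseq k) ω‖₊ : ℝ≥0∞))
          = (Ek k).indicator (fun _ => ((‖aseq k‖₊ : ℝ≥0∞))) := by
        funext ω
        by_cases h : ω ∈ Ek k
        · rw [Set.indicator_of_mem h, Set.indicator_of_mem h]
        · rw [Set.indicator_of_notMem h, Set.indicator_of_notMem h]; simp
      rw [heq, lintegral_indicator_const (hEm k), hEv k]
      calc (‖aseq k‖₊ : ℝ≥0∞) * qE ^ (k+1) ≤ 1 * qE ^ (k+1) := by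
            apply mul_le_mul_left
            rw [← enorm_eq_nnnorm, Real.enorm_eq_ofReal (aseq_nonneg k)]
            calc ENNReal.ofReal (aseq k) ≤ ENNReal.ofReal 1 :=
                  ENNReal.ofReal_le_ofReal (aseq_le_one k)
              _ = 1 := ENNReal.ofReal_one
        _ = qE ^ (k+1) := one_mul _
    rw [h1, integral_tsum
      (fun k => (measurable_const.indicator (hEm k)).aestronglyMeasurable) hfin]
    apply tsum_congr
    intro k
    rw [integral_indicator_const _ (hEm k), measureReal_def, hEv k, smul_eq_mul, ENNReal.toReal_pow, hqE_toReal]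
  have hintRi := hint_marg Ri E hEk_eq hEmeas hE_val
  have hintRj := hint_marg Rj F hFl_eq hFmeas hF_val
  -- product expansion
  have hlog2_eq : ∀ ω, Real.log (Ri ω) * Real.log (Rj ω)
      = ∑' kl : ℕ × ℕ, (E kl.1 ∩ F kl.2).indicator (fun _ => aseq kl.1 * aseq kl.2) ω := by
    intro ω
    have hsf : ∀ n : ℕ, Summable (fun k : ℕ => ‖if k + 2 ≤ n then aseq k else 0‖) := by
      intro n
      apply summable_of_ne_finset_zero (s := Finset.range n)
      intro k hk
      simp only [Finset.mem_range, not_lt] at hk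
      rw [if_neg (by omega), norm_zero]
    calc Real.log (Ri ω) * Real.log (Rj ω)
        = (∑' k : ℕ, (if k + 2 ≤ Ri ω then aseq k else 0))
          * (∑' l : ℕ, (if l + 2 ≤ Rj ω then aseq l else 0)) := by
          rw [tsum_aseq, tsum_aseq]
      _ = ∑' kl : ℕ × ℕ, (if kl.1 + 2 ≤ Ri ω then aseq kl.1 else 0)
          * (if kl.2 + 2 ≤ Rj ω then aseq kl.2 else 0) :=
          tsum_mul_tsum_of_summable_norm (hsf _) (hsf _)
      _ = ∑' kl : ℕ × ℕ, (E kl.1 ∩ F kl.2).indicator (fun _ => aseq kl.1 * aseq kl.2) ω := by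
          apply tsum_congr
          rintro ⟨k, l⟩
          by_cases h1 : k + 2 ≤ Ri ω <;> by_cases h2 : l + 2 ≤ Rj ω
          · rw [if_pos h1, if_pos h2,
              Set.indicator_of_mem (Set.mem_inter (by rw [hEk_eq k]; exact h1)
                (by rw [hFl_eq l]; exact h2))]
          · rw [if_neg h2, Set.indicator_of_notMem
              (fun hm => h2 (by have := hm.2; rw [hFl_eq l] at this; exact this)), mul_zero]
          · rw [if_neg h1, Set.indicator_of_notMem
              (fun hm => h1 (by have := hm.1; rw [hEk_eq k] at this; exact this)), zero_mul]
          · rw [if_neg h1, Set.indicator_of_notMem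
              (fun hm => h1 (by have := hm.1; rw [hEk_eq k] at this; exact this)), zero_mul]
  -- product integral
  have hgeomE2 : ∑' kl : ℕ × ℕ, qE ^ (kl.1+1) * qE ^ (kl.2+1) ≠ ⊤ := by
    rw [ENNReal.tsum_prod']
    have hinner : ∀ k : ℕ, ∑' l : ℕ, qE ^ (k+1) * qE ^ (l+1)
        = qE ^ (k+1) * ∑' l : ℕ, qE ^ (l+1) := fun k => ENNReal.tsum_mul_left
    rw [tsum_congr hinner, ENNReal.tsum_mul_right]
    exact ENNReal.mul_ne_top hgeomE1 hgeomE1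
  have hint_prod : ∫ ω, Real.log (Ri ω) * Real.log (Rj ω) ∂μ
      = ∑' kl : ℕ × ℕ, (r ^ (min kl.1 kl.2 + 1) * q ^ (max kl.1 kl.2 - min kl.1 kl.2))
          * (aseq kl.1 * aseq kl.2) := by
    have h1 : ∫ ω, Real.log (Ri ω) * Real.log (Rj ω) ∂μ
        = ∫ ω, ∑' kl : ℕ × ℕ, (E kl.1 ∩ F kl.2).indicator
            (fun _ => aseq kl.1 * aseq kl.2) ω ∂μ := by
      apply integral_congr_ae
      filter_upwards with ω using hlog2_eq ω
    have hfin : ∑' kl : ℕ × ℕ,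
        ∫⁻ ω, ‖(E kl.1 ∩ F kl.2).indicator (fun _ => aseq kl.1 * aseq kl.2) ω‖₊ ∂μ ≠ ⊤ := by
      apply ne_top_of_le_ne_top hgeomE2
      apply ENNReal.tsum_le_tsum
      rintro ⟨k, l⟩
      have heq : (fun ω => (‖(E k ∩ F l).indicator (fun _ => aseq k * aseq l) ω‖₊ : ℝ≥0∞))
          = (E k ∩ F l).indicator (fun _ => ((‖aseq k * aseq l‖₊ : ℝ≥0∞))) := by
        funext ω
        by_cases h : ω ∈ E k ∩ F l
        · rw [Set.indicator_of_mem h, Set.indicator_of_mem h]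
        · rw [Set.indicator_of_notMem h, Set.indicator_of_notMem h]; simp
      rw [heq, lintegral_indicator_const ((hEmeas k).inter (hFmeas l))]
      calc (‖aseq k * aseq l‖₊ : ℝ≥0∞) * μ (E k ∩ F l)
          ≤ 1 * (qE ^ (k+1) * qE ^ (l+1)) := by
            apply mul_le_mul'
            · rw [← enorm_eq_nnnorm, Real.enorm_eq_ofReal (mul_nonneg (aseq_nonneg k) (aseq_nonneg l))]
              calc ENNReal.ofReal (aseq k * aseq l) ≤ ENNReal.ofReal 1 :=
                    ENNReal.ofReal_le_ofReal
                      (mul_le_one₀ (aseq_le_one k) (aseq_nonneg l) (aseq_le_one l))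
                _ = 1 := ENNReal.ofReal_one
            · exact hEFle k l
        _ = qE ^ (k+1) * qE ^ (l+1) := one_mul _
    rw [h1, integral_tsum (fun kl : ℕ × ℕ => (measurable_const.indicator
      ((hEmeas kl.1).inter (hFmeas kl.2))).aestronglyMeasurable) hfin]
    apply tsum_congr
    rintro ⟨k, l⟩
    rw [integral_indicator_const _ ((hEmeas k).inter (hFmeas l)), measureReal_def, smul_eq_mul, hEFr k l]
  -- real-side summability
  have hgeo0 : Summable (fun k : ℕ => q ^ k) := summable_geometric_of_lt_one hq_pos.le hq_lt1
  have hgeo : Summable (fun k : ℕ => q ^ (k+1)) :=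
    (hgeo0.mul_left q).congr (fun k => (pow_succ' q k).symm)
  have hterm_nonneg : ∀ k : ℕ, 0 ≤ q ^ (k+1) * aseq k := fun k =>
    mul_nonneg (pow_nonneg hq_pos.le _) (aseq_nonneg k)
  have hterm_le : ∀ k : ℕ, q ^ (k+1) * aseq k ≤ q ^ (k+1) := fun k =>
    mul_le_of_le_one_right (pow_nonneg hq_pos.le _) (aseq_le_one k)
  have hSu : Summable (fun k : ℕ => q ^ (k+1) * aseq k) :=
    Summable.of_nonneg_of_le hterm_nonneg hterm_le hgeo
  have hSu_norm : Summable (fun k : ℕ => ‖q ^ (k+1) * aseq k‖) := summable_norm_iff.mpr hSu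
  have hSV : Summable (fun kl : ℕ × ℕ =>
      (q ^ (kl.1+1) * aseq kl.1) * (q ^ (kl.2+1) * aseq kl.2)) :=
    hSu.mul_of_nonneg hSu (fun k => hterm_nonneg k) (fun l => hterm_nonneg l)
  have hJr_le : ∀ k l : ℕ, r ^ (min k l + 1) * q ^ (max k l - min k l)
      ≤ q ^ (k+1) * q ^ (l+1) := by
    intro k l
    have h1 := min_le_max (a := k) (b := l)
    have h2 := min_add_max k l
    calc r ^ (min k l + 1) * q ^ (max k l - min k l)
        ≤ (q^2) ^ (min k l + 1) * q ^ (max k l - min k l) :=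
          mul_le_mul_of_nonneg_right (pow_le_pow_left₀ hr_nonneg hrq2 _)
            (pow_nonneg hq_pos.le _)
      _ = q ^ ((k+1) + (l+1)) := by
          rw [← pow_mul, ← pow_add]
          congr 1
          omega
      _ = q ^ (k+1) * q ^ (l+1) := pow_add q _ _
  have hW_le_V : ∀ kl : ℕ × ℕ,
      (r ^ (min kl.1 kl.2 + 1) * q ^ (max kl.1 kl.2 - min kl.1 kl.2))
        * (aseq kl.1 * aseq kl.2)
      ≤ (q ^ (kl.1+1) * aseq kl.1) * (q ^ (kl.2+1) * aseq kl.2) := by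
    rintro ⟨k, l⟩
    have haa : 0 ≤ aseq k * aseq l := mul_nonneg (aseq_nonneg k) (aseq_nonneg l)
    calc (r ^ (min k l + 1) * q ^ (max k l - min k l)) * (aseq k * aseq l)
        ≤ (q ^ (k+1) * q ^ (l+1)) * (aseq k * aseq l) :=
          mul_le_mul_of_nonneg_right (hJr_le k l) haa
      _ = (q ^ (k+1) * aseq k) * (q ^ (l+1) * aseq l) := by ring
  have hW_nonneg : ∀ kl : ℕ × ℕ, 0 ≤
      (r ^ (min kl.1 kl.2 + 1) * q ^ (max kl.1 kl.2 - min kl.1 kl.2))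
        * (aseq kl.1 * aseq kl.2) := by
    rintro ⟨k, l⟩
    exact mul_nonneg (mul_nonneg (pow_nonneg hr_nonneg _) (pow_nonneg hq_pos.le _))
      (mul_nonneg (aseq_nonneg k) (aseq_nonneg l))
  have hSW : Summable (fun kl : ℕ × ℕ =>
      (r ^ (min kl.1 kl.2 + 1) * q ^ (max kl.1 kl.2 - min kl.1 kl.2))
        * (aseq kl.1 * aseq kl.2)) :=
    Summable.of_nonneg_of_le hW_nonneg hW_le_V hSV
  have hVfac : (∑' k : ℕ, q ^ (k+1) * aseq k) * (∑' l : ℕ, q ^ (l+1) * aseq l)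
      = ∑' kl : ℕ × ℕ, (q ^ (kl.1+1) * aseq kl.1) * (q ^ (kl.2+1) * aseq kl.2) :=
    tsum_mul_tsum_of_summable_norm hSu_norm hSu_norm
  have hcov : (∫ ω, Real.log (Ri ω) * Real.log (Rj ω) ∂μ) -
      (∫ ω, Real.log (Ri ω) ∂μ) * ∫ ω, Real.log (Rj ω) ∂μ
      = ∑' kl : ℕ × ℕ,
        ((r ^ (min kl.1 kl.2 + 1) * q ^ (max kl.1 kl.2 - min kl.1 kl.2))
          * (aseq kl.1 * aseq kl.2)
        - (q ^ (kl.1+1) * aseq kl.1) * (q ^ (kl.2+1) * aseq kl.2)) := by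
    rw [hint_prod, hintRi, hintRj, hVfac, ← Summable.tsum_sub hSW hSV]
  -- gap estimate
  have hgap : ∀ k l : ℕ, q ^ (k+1) * q ^ (l+1)
      - r ^ (min k l + 1) * q ^ (max k l - min k l)
      ≤ (((min k l : ℕ) : ℝ) + 1) * (1/(N:ℝ))^2 * q ^ (k + l) := by
    intro k l
    have h1 := min_le_max (a := k) (b := l)
    have h2 := min_add_max k l
    have hid : q ^ (k+1) * q ^ (l+1) = q ^ (max k l - min k l) * (q^2) ^ (min k l + 1) := by
      rw [← pow_mul, ← pow_add, ← pow_add]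
      congr 1
      omega
    have hpow := HTCov.pow_sub_pow_le (x := q^2) (y := r) hr_nonneg hrq2 (min k l)
    calc q ^ (k+1) * q ^ (l+1) - r ^ (min k l + 1) * q ^ (max k l - min k l)
        = q ^ (max k l - min k l) * ((q^2) ^ (min k l + 1) - r ^ (min k l + 1)) := by
          rw [hid]; ring
      _ ≤ q ^ (max k l - min k l) * ((((min k l : ℕ) : ℝ) + 1) * (q^2 - r) * (q^2) ^ (min k l)) :=
          mul_le_mul_of_nonneg_left hpow (pow_nonneg hq_pos.le _)
      _ = (((min k l : ℕ) : ℝ) + 1) * (1/(N:ℝ))^2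
            * (q ^ (max k l - min k l) * (q^2) ^ (min k l)) := by
          rw [hq2r]; ring
      _ = (((min k l : ℕ) : ℝ) + 1) * (1/(N:ℝ))^2 * q ^ (k + l) := by
          rw [← pow_mul, ← pow_add]
          congr 1
          congr 1
          omega
  have hlow : ∀ kl : ℕ × ℕ,
      (q ^ (kl.1+1) * aseq kl.1) * (q ^ (kl.2+1) * aseq kl.2)
      - (r ^ (min kl.1 kl.2 + 1) * q ^ (max kl.1 kl.2 - min kl.1 kl.2))
          * (aseq kl.1 * aseq kl.2)
      ≤ ((1/(N:ℝ))^2 * q ^ kl.1) * (aseq kl.2 * q ^ kl.2) := by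
    rintro ⟨k, l⟩
    have haa : 0 ≤ aseq k * aseq l := mul_nonneg (aseq_nonneg k) (aseq_nonneg l)
    have hmk : (((min k l : ℕ) : ℝ) + 1) * aseq k ≤ 1 := by
      have hcast : (((min k l : ℕ) : ℝ) + 1) ≤ (k:ℝ) + 1 := by
        have : ((min k l : ℕ) : ℝ) ≤ (k:ℝ) := Nat.cast_le.mpr (min_le_left k l)
        linarith
      calc (((min k l : ℕ) : ℝ) + 1) * aseq k ≤ ((k:ℝ)+1) * aseq k :=
            mul_le_mul_of_nonneg_right hcast (aseq_nonneg k)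
        _ = aseq k * ((k:ℝ)+1) := mul_comm _ _
        _ ≤ 1 := aseq_mul_le k
    calc (q ^ (k+1) * aseq k) * (q ^ (l+1) * aseq l)
        - (r ^ (min k l + 1) * q ^ (max k l - min k l)) * (aseq k * aseq l)
        = (q ^ (k+1) * q ^ (l+1) - r ^ (min k l + 1) * q ^ (max k l - min k l))
            * (aseq k * aseq l) := by ring
      _ ≤ ((((min k l : ℕ) : ℝ) + 1) * (1/(N:ℝ))^2 * q ^ (k + l)) * (aseq k * aseq l) :=
          mul_le_mul_of_nonneg_right (hgap k l) haa
      _ = ((1/(N:ℝ))^2 * q ^ (k+l)) * (((((min k l : ℕ) : ℝ) + 1) * aseq k) * aseq l) := by ring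
      _ ≤ ((1/(N:ℝ))^2 * q ^ (k+l)) * (1 * aseq l) := by
          apply mul_le_mul_of_nonneg_left _ (by positivity)
          exact mul_le_mul_of_nonneg_right hmk (aseq_nonneg l)
      _ = ((1/(N:ℝ))^2 * q ^ k) * (aseq l * q ^ l) := by rw [pow_add]; ring
  -- summing the bound
  have hSf : Summable (fun k : ℕ => (1/(N:ℝ))^2 * q ^ k) := hgeo0.mul_left _
  have hg_nonneg : ∀ l : ℕ, 0 ≤ aseq l * q ^ l := fun l =>
    mul_nonneg (aseq_nonneg l) (pow_nonneg hq_pos.le _)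
  have hSg : Summable (fun l : ℕ => aseq l * q ^ l) :=
    Summable.of_nonneg_of_le hg_nonneg
      (fun l => mul_le_of_le_one_left (pow_nonneg hq_pos.le _) (aseq_le_one l)) hgeo0
  have hSD : Summable (fun kl : ℕ × ℕ => ((1/(N:ℝ))^2 * q ^ kl.1) * (aseq kl.2 * q ^ kl.2)) :=
    hSf.mul_of_nonneg hSg (fun k => by positivity) (fun l => hg_nonneg l)
  have h1q : 1 - q = 1/(N:ℝ) := by rw [hq_def]; ring
  have hlogsum : HasSum (fun n : ℕ => q ^ (n+1) / ((n:ℝ)+1)) (Real.log N) := by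
    have h := Real.hasSum_pow_div_log_of_abs_lt_one (x := q)
      (by rw [abs_of_nonneg hq_pos.le]; exact hq_lt1)
    rw [h1q, one_div, Real.log_inv, neg_neg] at h
    exact h
  have hDsum : ∑' kl : ℕ × ℕ, ((1/(N:ℝ))^2 * q ^ kl.1) * (aseq kl.2 * q ^ kl.2)
      ≤ 2 * (1/(N:ℝ)) * Real.log N := by
    have hfac : ∑' kl : ℕ × ℕ, ((1/(N:ℝ))^2 * q ^ kl.1) * (aseq kl.2 * q ^ kl.2)
        = (∑' k : ℕ, (1/(N:ℝ))^2 * q ^ k) * (∑' l : ℕ, aseq l * q ^ l) :=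
      (tsum_mul_tsum_of_summable_norm (summable_norm_iff.mpr hSf)
        (summable_norm_iff.mpr hSg)).symm
    rw [hfac]
    have h1 : ∑' k : ℕ, (1/(N:ℝ))^2 * q ^ k = (1/(N:ℝ))^2 * (N:ℝ) := by
      rw [tsum_mul_left, tsum_geometric_of_lt_one hq_pos.le hq_lt1, h1q, one_div, inv_inv]
    have h2 : ∑' l : ℕ, aseq l * q ^ l ≤ Real.log N * q⁻¹ := by
      have hb : ∀ l : ℕ, aseq l * q ^ l ≤ (q ^ (l+1) / ((l:ℝ)+1)) * q⁻¹ := by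
        intro l
        have hq0 : q ≠ 0 := hq_pos.ne'
        have heq : (q ^ (l+1) / ((l:ℝ)+1)) * q⁻¹ = (1/((l:ℝ)+1)) * q ^ l := by
          rw [pow_succ]
          field_simp
        rw [heq]
        exact mul_le_mul_of_nonneg_right (aseq_le l) (pow_nonneg hq_pos.le _)
      calc ∑' l : ℕ, aseq l * q ^ l ≤ ∑' l : ℕ, (q ^ (l+1) / ((l:ℝ)+1)) * q⁻¹ :=
            Summable.tsum_le_tsum hb hSg (hlogsum.summable.mul_right _)
        _ = Real.log N * q⁻¹ := by rw [tsum_mul_right, hlogsum.tsum_eq]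
    have hqinv : q⁻¹ ≤ 3/2 := by
      rw [show (3:ℝ)/2 = ((2:ℝ)/3)⁻¹ from by norm_num]
      exact inv_anti₀ (by norm_num) hq_ge
    have hlogN : 0 ≤ Real.log N := Real.log_nonneg (by linarith)
    have hNsq : (1/(N:ℝ))^2 * (N:ℝ) = 1/(N:ℝ) := by
      have hN0 : (N:ℝ) ≠ 0 := hNpos.ne'
      field_simp
    have hg_sum_nonneg : 0 ≤ ∑' l : ℕ, aseq l * q ^ l := tsum_nonneg hg_nonneg
    calc (∑' k : ℕ, (1/(N:ℝ))^2 * q ^ k) * (∑' l : ℕ, aseq l * q ^ l)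
        ≤ ((1/(N:ℝ))^2 * (N:ℝ)) * (Real.log N * q⁻¹) := by
          rw [h1]
          exact mul_le_mul_of_nonneg_left h2 (by positivity)
      _ = (1/(N:ℝ)) * Real.log N * q⁻¹ := by rw [hNsq]; ring
      _ ≤ (1/(N:ℝ)) * Real.log N * (3/2) := by
          exact mul_le_mul_of_nonneg_left hqinv (mul_nonneg hpN.le hlogN)
      _ ≤ 2 * (1/(N:ℝ)) * Real.log N := by nlinarith [mul_nonneg hpN.le hlogN]
  constructor
  · rw [hcov]
    exact tsum_nonpos (fun kl => sub_nonpos.mpr (hW_le_V kl))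
  · rw [hcov]
    calc -(2 * (1/(N:ℝ)) * Real.log N)
        ≤ -(∑' kl : ℕ × ℕ, ((1/(N:ℝ))^2 * q ^ kl.1) * (aseq kl.2 * q ^ kl.2)) :=
          neg_le_neg hDsum
      _ = ∑' kl : ℕ × ℕ, -(((1/(N:ℝ))^2 * q ^ kl.1) * (aseq kl.2 * q ^ kl.2)) := by
          rw [tsum_neg]
      _ ≤ ∑' kl : ℕ × ℕ,
          ((r ^ (min kl.1 kl.2 + 1) * q ^ (max kl.1 kl.2 - min kl.1 kl.2))
            * (aseq kl.1 * aseq kl.2)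
          - (q ^ (kl.1+1) * aseq kl.1) * (q ^ (kl.2+1) * aseq kl.2)) := by
          apply Summable.tsum_le_tsum _ hSD.neg (hSW.sub hSV)
          intro kl
          have := hlow kl
          linarith
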